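/- arXiv:1805.10337 — 2 statements merged into one kernel-verified Lean document; each statement's English description precedes it below -/
import Mathlib

section
/- Let d = 2, μ ∈ ℝ, α,β ∈ ℝ² orthonormal, S = (−μ α⊗β, Id). If f : ℝ²×ℝ² → ℝ is continuously differentiable and S-objective (f(z + xα + yβ, w + μyα) = f(z,w) for all x,y ∈ ℝ), then ∇_z f(z,w) = −μ (∇_w f(z,w) · α) β for all (z,w). -/
open scoped RealInnerProductSpace

private lemma dir_zero {E : Type*} [NormedAddCommGroup E] [NormedSpace ℝ E]
    (f : E × E → ℝ) (hf : ContDiff ℝ 1 f) (z w a b : E)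
    (h : ∀ t : ℝ, f (z + t • a, w + t • b) = f (z, w)) :
    fderiv ℝ f (z, w) (a, b) = 0 := by
  have hc : HasDerivAt (fun t : ℝ => (z + t • a, w + t • b)) (a, b) 0 := by
    have h1 : HasDerivAt (fun t : ℝ => z + t • a) a 0 := by
      simpa using (((hasDerivAt_id (0:ℝ)).smul_const a).const_add z)
    have h2 : HasDerivAt (fun t : ℝ => w + t • b) b 0 := by
      simpa using (((hasDerivAt_id (0:ℝ)).smul_const b).const_add w)
    exact h1.prodMk h2
  have hfd : HasFDerivAt f (fderiv ℝ f (z, w)) (z, w) :=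
    (hf.differentiable one_ne_zero (z, w)).hasFDerivAt
  have hfd' : HasFDerivAt f (fderiv ℝ f (z, w)) (z + (0:ℝ) • a, w + (0:ℝ) • b) := by
    simpa using hfd
  have hcomp : HasDerivAt (fun t : ℝ => f (z + t • a, w + t • b))
      (fderiv ℝ f (z, w) (a, b)) 0 := by
    have := hfd'.comp_hasDerivAt (x := (0:ℝ)) hc
    exact this
  have hconst : HasDerivAt (fun t : ℝ => f (z + t • a, w + t • b)) 0 0 := by
    have : (fun t : ℝ => f (z + t • a, w + t • b)) = fun _ => f (z, w) :=
      funext h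
    rw [this]
    exact hasDerivAt_const _ _
  exact hcomp.unique hconst

theorem stmt_3 (μ : ℝ) (α β : EuclideanSpace ℝ (Fin 2))
    (hαα : ⟪α, α⟫ = 1) (hββ : ⟪β, β⟫ = 1) (hαβ : ⟪α, β⟫ = 0)
    (f : EuclideanSpace ℝ (Fin 2) × EuclideanSpace ℝ (Fin 2) → ℝ)
    (hf : ContDiff ℝ 1 f)
    (hobj : ∀ z w : EuclideanSpace ℝ (Fin 2), ∀ x y : ℝ,
      f (z + x • α + y • β, w + (μ * y) • α) = f (z, w)) :
    ∀ z w v : EuclideanSpace ℝ (Fin 2),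
      fderiv ℝ f (z, w) (v, 0) = -μ * (fderiv ℝ f (z, w) (0, α)) * ⟪β, v⟫ := by
  intro z w v
  set L := fderiv ℝ f (z, w) with hL
  -- derivative in direction (α, 0) is zero
  have hA : L (α, (0 : EuclideanSpace ℝ (Fin 2))) = 0 := by
    apply dir_zero f hf z w α 0
    intro t
    have := hobj z w t 0
    simpa using this
  -- derivative in direction (β, μ • α) is zero
  have hB : L (β, μ • α) = 0 := by
    apply dir_zero f hf z w β (μ • α)
    intro t
    have := hobj z w 0 t
    have e1 : (μ * t) • α = t • μ • α := by
      rw [smul_smul, mul_comm]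
    simpa [e1] using this
  have hB' : L (β, (0 : EuclideanSpace ℝ (Fin 2))) = -μ * L (0, α) := by
    have hsplit : ((β, μ • α) : EuclideanSpace ℝ (Fin 2) × EuclideanSpace ℝ (Fin 2))
        = (β, 0) + μ • ((0 : EuclideanSpace ℝ (Fin 2)), α) := by
      simp [Prod.ext_iff]
    have := hB
    rw [hsplit, map_add, map_smul] at this
    have : L (β, 0) + μ * L (0, α) = 0 := by simpa using this
    linarith
  -- α, β span the space
  have horth : Orthonormal ℝ (![α, β]) := by
    rw [orthonormal_iff_ite]
    intro i j
    fin_cases i <;> fin_cases j <;>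
      simp_all [real_inner_comm β α, real_inner_self_eq_norm_sq]
  have hli : LinearIndependent ℝ (![α, β]) := horth.linearIndependent
  have hcard : Fintype.card (Fin 2) = Module.finrank ℝ (EuclideanSpace ℝ (Fin 2)) := by
    simp
  let bas := basisOfLinearIndependentOfCardEqFinrank hli hcard
  have hspan : v ∈ Submodule.span ℝ ({α, β} : Set (EuclideanSpace ℝ (Fin 2))) := by
    have : Submodule.span ℝ (Set.range ![α, β]) = ⊤ := by
      have := bas.span_eq
      rwa [coe_basisOfLinearIndependentOfCardEqFinrank] at this
    have hrange : Set.range ![α, β] = {α, β} := by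
      ext x
      simp [Fin.exists_fin_two]
      tauto
    rw [hrange] at this
    rw [this]
    trivial
  obtain ⟨c₁, c₂, hv⟩ := Submodule.mem_span_pair.mp hspan
  have hβv : ⟪β, v⟫ = c₂ := by
    rw [← hv]
    have hβα : ⟪β, α⟫ = 0 := by rw [real_inner_comm]; exact hαβ
    rw [inner_add_right, real_inner_smul_right, real_inner_smul_right, hβα, hββ]
    ring
  have hvsplit : ((v, (0 : EuclideanSpace ℝ (Fin 2))) :
      EuclideanSpace ℝ (Fin 2) × EuclideanSpace ℝ (Fin 2))
      = c₁ • (α, 0) + c₂ • (β, 0) := by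
    simp [Prod.ext_iff, ← hv]
  rw [hvsplit, map_add, map_smul, map_smul]
  simp only [smul_eq_mul, hA, hB', hβv]
  ring
end

section
/- The 5×5 matrix N with rows (0, 2√3, 0, 0, 0), (−√3/2, −2, 3√3/2, 0, 0), (0, −√3, −4, √3, 0), (0, 0, −3√3/2, −6, √3/2), (0, 0, 0, −2√3, −8) has all eigenvalues with strictly negative real part. -/
set_option maxRecDepth 10000
set_option maxHeartbeats 1000000

open Matrix

theorem stmt_6 :
    let s3 : ℝ := Real.sqrt 3
    let N : Matrix (Fin 5) (Fin 5) ℝ :=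
      !![0, 2*s3, 0, 0, 0;
         -s3/2, -2, 3*s3/2, 0, 0;
         0, -s3, -4, s3, 0;
         0, 0, -3*s3/2, -6, s3/2;
         0, 0, 0, -2*s3, -8]
    ∀ z : ℂ, z ∈ spectrum ℂ (N.map (Complex.ofReal ·)) → z.re < 0 := by
  intro s3 N z hz
  have hs : (s3 : ℝ) ^ 2 = 3 := Real.sq_sqrt (by norm_num)
  rw [spectrum.mem_iff] at hz
  have hdet : ((algebraMap ℂ (Matrix (Fin 5) (Fin 5) ℂ)) z - N.map (Complex.ofReal ·)).det = 0 := by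
    by_contra h
    exact hz ((Matrix.isUnit_iff_isUnit_det _).mpr (isUnit_iff_ne_zero.mpr h))
  set c : ℂ := (s3 : ℂ) with hc
  have hcs : c ^ 2 = 3 := by
    rw [hc, ← Complex.ofReal_pow, hs]; norm_num
  have key : (algebraMap ℂ (Matrix (Fin 5) (Fin 5) ℂ)) z - N.map (Complex.ofReal ·) =
      !![z, -(2*c), 0, 0, 0;
         c/2, z+2, -(3*c/2), 0, 0;
         0, c, z+4, -c, 0;
         0, 0, 3*c/2, z+6, -(c/2);
         0, 0, 0, 2*c, z+8] := by
    ext i j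
    fin_cases i <;> fin_cases j <;>
      simp [N, Matrix.algebraMap_matrix_apply, Matrix.map_apply, Matrix.vecHead,
        Matrix.vecTail] <;> push_cast <;> ring
  rw [key] at hdet
  simp only [Matrix.det_succ_row_zero, Fin.sum_univ_succ, Matrix.det_fin_one,
    Matrix.submatrix_apply, Matrix.submatrix_submatrix, Function.comp_apply,
    Fin.zero_succAbove, Fin.succ_succAbove_zero, Fin.succ_succAbove_succ,
    Matrix.cons_val_zero, Matrix.cons_val_succ, Matrix.head_cons, Matrix.of_apply,
    Matrix.cons_val', Matrix.empty_val', Matrix.cons_val_fin_one, Matrix.head_fin_const,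
    Fin.sum_univ_zero, Finset.univ_unique, Finset.sum_singleton,
    Fin.val_succ, Fin.val_zero, pow_succ, pow_zero, Matrix.det_fin_zero,
    Fin.default_eq_zero, Matrix.cons_val_one] at hdet
  have hzero : (z+2)*(z+3)*(z+4)*(z+5)*(z+6) = 0 := by
    linear_combination hdet - (4*z*c^2 + 16*c^2 + 5*z^3 + 60*z^2 + 220*z + 240) * hcs
  have : z = -2 ∨ z = -3 ∨ z = -4 ∨ z = -5 ∨ z = -6 := by
    rcases mul_eq_zero.mp hzero with h | h
    · rcases mul_eq_zero.mp h with h | h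
      · rcases mul_eq_zero.mp h with h | h
        · rcases mul_eq_zero.mp h with h | h
          · exact Or.inl (by linear_combination h)
          · exact Or.inr (Or.inl (by linear_combination h))
        · exact Or.inr (Or.inr (Or.inl (by linear_combination h)))
      · exact Or.inr (Or.inr (Or.inr (Or.inl (by linear_combination h))))
    · exact Or.inr (Or.inr (Or.inr (Or.inr (by linear_combination h))))
  rcases this with h | h | h | h | h <;> rw [h] <;> norm_num
end
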